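/- Let 0 < γξ² < α and r_l ∈ ℝ^p. Then the minimizer of w ↦ (1/(2ξ²))‖r_l − w‖₂² + γ ρ_α(‖w‖₂) over ℝ^p is: 0 if ‖r_l‖₂ ≤ γξ²; (α/(α−γξ²))(1 − γξ²/‖r_l‖₂)·r_l if γξ² < ‖r_l‖₂ ≤ α; and r_l if ‖r_l‖₂ > α. -/

import Mathlib

/-- Scaled minimax concave penalty. -/
noncomputable def mcp (α w : ℝ) : ℝ :=
  if |w| ≤ α then |w| - w ^ 2 / (2 * α) else α / 2

noncomputable def tstar (α γ ξ s : ℝ) : ℝ :=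
  if s ≤ γ * ξ ^ 2 then 0 else if s ≤ α then α * (s - γ * ξ ^ 2) / (α - γ * ξ ^ 2) else s

noncomputable def gaux (α γ ξ s t : ℝ) : ℝ :=
  1 / (2 * ξ ^ 2) * (s - t) ^ 2 + γ * mcp α t

lemma gaux_low {α γ ξ s t : ℝ} (hα : 0 < α) (hξ : 0 < ξ) (ht : 0 ≤ t) (h : t ≤ α) :
    gaux α γ ξ s t = (α * (s - t) ^ 2 + γ * ξ ^ 2 * (2 * α * t - t ^ 2)) / (2 * α * ξ ^ 2) := by
  rw [gaux, mcp, abs_of_nonneg ht, if_pos h]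
  field_simp

lemma gaux_high {α γ ξ s t : ℝ} (hα : 0 < α) (hξ : 0 < ξ) (ht : 0 ≤ t) (h : α < t) :
    gaux α γ ξ s t = (α * (s - t) ^ 2 + γ * ξ ^ 2 * α ^ 2) / (2 * α * ξ ^ 2) := by
  rw [gaux, mcp, abs_of_nonneg ht, if_neg (not_le.mpr h)]
  field_simp

lemma tstar_nonneg {α γ ξ s : ℝ} (hL : 0 < γ * ξ ^ 2) (h : γ * ξ ^ 2 < α) (hs : 0 ≤ s) :
    0 ≤ tstar α γ ξ s := by
  rw [tstar]
  split_ifs with h1 h2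
  · exact le_rfl
  · have hα : 0 < α := lt_trans hL h
    have h1' := not_le.mp h1
    exact div_nonneg (by nlinarith) (by linarith)
  · exact hs

lemma tstar_le {α γ ξ s : ℝ} (hL : 0 < γ * ξ ^ 2) (h : γ * ξ ^ 2 < α) (hs : 0 ≤ s) :
    tstar α γ ξ s ≤ s := by
  rw [tstar]
  split_ifs with h1 h2
  · exact hs
  · rw [div_le_iff₀ (by linarith)]
    nlinarith [not_le.mp h1]
  · exact le_rfl

lemma tstar_le_alpha {α γ ξ s : ℝ} (hL : 0 < γ * ξ ^ 2) (h : γ * ξ ^ 2 < α) (hs : 0 ≤ s)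
    (hsa : s ≤ α) : tstar α γ ξ s ≤ α := le_trans (tstar_le hL h hs) hsa

lemma oneD {α γ ξ s : ℝ} (hγ : 0 < γ) (hξ : 0 < ξ) (h : γ * ξ ^ 2 < α) (hs : 0 ≤ s)
    {t : ℝ} (ht : 0 ≤ t) (hne : t ≠ tstar α γ ξ s) :
    gaux α γ ξ s (tstar α γ ξ s) < gaux α γ ξ s t := by
  have hξ2 : (0:ℝ) < ξ ^ 2 := by positivity
  have hL : 0 < γ * ξ ^ 2 := by positivity
  have hα : 0 < α := lt_trans hL h
  have hD : (0:ℝ) < 2 * α * ξ ^ 2 := by positivity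
  rw [tstar] at hne ⊢
  split_ifs at hne ⊢ with h1 h2
  · -- s ≤ γξ², tstar = 0
    have ht0 : 0 < t := lt_of_le_of_ne ht (Ne.symm hne)
    rw [gaux_low hα hξ le_rfl hα.le]
    by_cases h3 : t ≤ α
    · rw [gaux_low hα hξ ht h3, div_lt_div_iff_of_pos_right hD]
      nlinarith [mul_pos (mul_pos (sub_pos.2 h) ht0) ht0,
        mul_nonneg (mul_nonneg hα.le ht0.le) (sub_nonneg.2 h1)]
    · rw [gaux_high hα hξ ht (not_le.mp h3), div_lt_div_iff_of_pos_right hD]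
      have e1 : s ^ 2 < γ * ξ ^ 2 * α := by
        nlinarith [mul_le_mul_of_nonneg_right h1 hs, mul_le_mul_of_nonneg_left h1 hL.le,
          mul_lt_mul_of_pos_left h hL]
      nlinarith [mul_nonneg hα.le (sq_nonneg (t - s)), mul_lt_mul_of_pos_left e1 hα]
  · -- γξ² < s ≤ α
    push_neg at h1
    set T := α * (s - γ * ξ ^ 2) / (α - γ * ξ ^ 2) with hTdef
    have hane : α - γ * ξ ^ 2 ≠ 0 := ne_of_gt (by linarith)
    have hT : T * (α - γ * ξ ^ 2) = α * (s - γ * ξ ^ 2) := by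
      rw [hTdef, div_mul_cancel₀ _ hane]
    have hT0 : 0 ≤ T := div_nonneg (by nlinarith) (by linarith)
    have hTα : T ≤ α := by
      rw [hTdef, div_le_iff₀ (by linarith)]; nlinarith
    rw [gaux_low hα hξ hT0 hTα]
    by_cases h3 : t ≤ α
    · rw [gaux_low hα hξ ht h3, div_lt_div_iff_of_pos_right hD]
      have key : α * (s - t) ^ 2 + γ * ξ ^ 2 * (2 * α * t - t ^ 2) -
          (α * (s - T) ^ 2 + γ * ξ ^ 2 * (2 * α * T - T ^ 2)) =
          (α - γ * ξ ^ 2) * (t - T) ^ 2 := by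
        linear_combination (2 * (t - T)) * hT
      have h0 : t - T ≠ 0 := sub_ne_zero.2 hne
      have hp : 0 < (α - γ * ξ ^ 2) * (t - T) ^ 2 :=
        mul_pos (by linarith) (lt_of_le_of_ne (sq_nonneg _) (Ne.symm (pow_ne_zero 2 h0)))
      linarith
    · rw [gaux_high hα hξ ht (not_le.mp h3), div_lt_div_iff_of_pos_right hD]
      have key : α * (s - α) ^ 2 + γ * ξ ^ 2 * α ^ 2 -
          (α * (s - T) ^ 2 + γ * ξ ^ 2 * (2 * α * T - T ^ 2)) =
          (α - γ * ξ ^ 2) * (α - T) ^ 2 := by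
        linear_combination (2 * (α - T)) * hT
      have hp : 0 ≤ (α - γ * ξ ^ 2) * (α - T) ^ 2 :=
        mul_nonneg (by linarith) (by positivity)
      have h4 : (s - α) ^ 2 < (s - t) ^ 2 := by nlinarith [not_le.mp h3]
      nlinarith
  · -- s > α
    push_neg at h1 h2
    rw [gaux_high hα hξ hs h2]
    by_cases h3 : t ≤ α
    · rw [gaux_low hα hξ ht h3, div_lt_div_iff_of_pos_right hD]
      nlinarith [sq_nonneg (α - t), mul_pos (sub_pos.2 h2) (show (0:ℝ) < s + α - 2*t by linarith)]
    · rw [gaux_high hα hξ ht (not_le.mp h3), div_lt_div_iff_of_pos_right hD]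
      have h0 : s - t ≠ 0 := sub_ne_zero.2 (Ne.symm hne)
      have hp : (0:ℝ) < α * (s - t) ^ 2 :=
        mul_pos hα (lt_of_le_of_ne (sq_nonneg _) (Ne.symm (pow_ne_zero 2 h0)))
      nlinarith [hp]

lemma oneD_le {α γ ξ s : ℝ} (hγ : 0 < γ) (hξ : 0 < ξ) (h : γ * ξ ^ 2 < α) (hs : 0 ≤ s)
    {t : ℝ} (ht : 0 ≤ t) : gaux α γ ξ s (tstar α γ ξ s) ≤ gaux α γ ξ s t := by
  by_cases he : t = tstar α γ ξ s
  · rw [he]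
  · exact (oneD hγ hξ h hs ht he).le

theorem prox_group_mcp (α γ ξ : ℝ) (hγ : 0 < γ) (hξ : 0 < ξ)
    (h : γ * ξ ^ 2 < α) (p : ℕ) (r : EuclideanSpace ℝ (Fin p)) :
    {w : EuclideanSpace ℝ (Fin p) | ∀ v : EuclideanSpace ℝ (Fin p),
        1 / (2 * ξ ^ 2) * ‖r - w‖ ^ 2 + γ * mcp α ‖w‖ ≤
        1 / (2 * ξ ^ 2) * ‖r - v‖ ^ 2 + γ * mcp α ‖v‖} =
      {if ‖r‖ ≤ γ * ξ ^ 2 then 0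
       else if ‖r‖ ≤ α then ((α / (α - γ * ξ ^ 2)) * (1 - γ * ξ ^ 2 / ‖r‖)) • r
       else r} := by
  have hξ2 : (0:ℝ) < ξ ^ 2 := by positivity
  have hL : 0 < γ * ξ ^ 2 := by positivity
  have hα : 0 < α := lt_trans hL h
  set s := ‖r‖ with hsdef
  have hs0 : 0 ≤ s := norm_nonneg r
  set c : ℝ := if s ≤ γ * ξ ^ 2 then 0 else if s ≤ α then
      α / (α - γ * ξ ^ 2) * (1 - γ * ξ ^ 2 / s) else 1 with hcdef
  have hcand : (if s ≤ γ * ξ ^ 2 then 0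
      else if s ≤ α then (α / (α - γ * ξ ^ 2) * (1 - γ * ξ ^ 2 / s)) • r
      else r) = c • r := by
    rw [hcdef]
    split_ifs with h1 h2
    · rw [zero_smul]
    · rfl
    · rw [one_smul]
  have hc0 : 0 ≤ c := by
    rw [hcdef]; split_ifs with h1 h2
    · exact le_rfl
    · push_neg at h1
      have h1' : γ * ξ ^ 2 / s ≤ 1 := by
        rw [div_le_one (by linarith)]; linarith
      have : 0 < α / (α - γ * ξ ^ 2) := div_pos hα (by linarith)
      nlinarith
    · exact zero_le_one
  have hc1 : c ≤ 1 := by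
    rw [hcdef]; split_ifs with h1 h2
    · exact zero_le_one
    · push_neg at h1
      rw [div_mul_eq_mul_div, div_le_one (by linarith)]
      have hd : γ * ξ ^ 2 / α ≤ γ * ξ ^ 2 / s :=
        div_le_div_of_nonneg_left hL.le (by linarith) h2
      have hm : α * (1 - γ * ξ ^ 2 / s) ≤ α * (1 - γ * ξ ^ 2 / α) :=
        mul_le_mul_of_nonneg_left (by linarith) hα.le
      have e : α * (1 - γ * ξ ^ 2 / α) = α - γ * ξ ^ 2 := by field_simp
      linarith
    · exact le_rfl
  have hcs : c * s = tstar α γ ξ s := by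
    rw [hcdef, tstar]
    split_ifs with h1 h2
    · rw [zero_mul]
    · push_neg at h1
      have hsne : s ≠ 0 := ne_of_gt (by linarith)
      have hane : α - γ * ξ ^ 2 ≠ 0 := ne_of_gt (by linarith)
      field_simp
    · rw [one_mul]
  -- norms of candidate
  have hnc : ‖c • r‖ = c * s := by
    rw [norm_smul, Real.norm_eq_abs, abs_of_nonneg hc0, hsdef]
  have hnrc : ‖r - c • r‖ = (1 - c) * s := by
    have : r - c • r = (1 - c) • r := by
      rw [sub_smul, one_smul]
    rw [this, norm_smul, Real.norm_eq_abs, abs_of_nonneg (by linarith), hsdef]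
  have hfc : 1 / (2 * ξ ^ 2) * ‖r - c • r‖ ^ 2 + γ * mcp α ‖c • r‖ =
      gaux α γ ξ s (tstar α γ ξ s) := by
    rw [hnrc, hnc, hcs, gaux]
    congr 1
    rw [← hcs]; ring
  have hlow : ∀ v : EuclideanSpace ℝ (Fin p),
      gaux α γ ξ s ‖v‖ ≤ 1 / (2 * ξ ^ 2) * ‖r - v‖ ^ 2 + γ * mcp α ‖v‖ := by
    intro v
    rw [gaux]
    have h1 : (s - ‖v‖) ^ 2 ≤ ‖r - v‖ ^ 2 := by
      have h2 := abs_norm_sub_norm_le r v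
      calc (s - ‖v‖) ^ 2 = |‖r‖ - ‖v‖| ^ 2 := by rw [sq_abs]
        _ ≤ ‖r - v‖ ^ 2 := by gcongr
    have : 0 ≤ 1 / (2 * ξ ^ 2) := by positivity
    nlinarith
  rw [hcand]
  ext w
  simp only [Set.mem_setOf_eq, Set.mem_singleton_iff]
  constructor
  · intro hw
    have key : 1 / (2 * ξ ^ 2) * ‖r - w‖ ^ 2 + γ * mcp α ‖w‖ ≤ gaux α γ ξ s (tstar α γ ξ s) := by
      calc _ ≤ _ := hw (c • r)
        _ = _ := hfc
    have hwn : ‖w‖ = tstar α γ ξ s := by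
      by_contra hne
      exact absurd (le_trans (hlow w) key)
        (not_le.mpr (oneD hγ hξ h hs0 (norm_nonneg w) hne))
    -- extract equality of norms
    have hsq : ‖r - w‖ ^ 2 ≤ (s - ‖w‖) ^ 2 := by
      have h5 := key
      rw [← hwn] at h5
      rw [gaux] at h5
      have h2ξ : (0:ℝ) < 1 / (2 * ξ ^ 2) := by positivity
      have h6 : 1 / (2 * ξ ^ 2) * ‖r - w‖ ^ 2 ≤ 1 / (2 * ξ ^ 2) * (s - ‖w‖) ^ 2 := by
        linarith
      exact (mul_le_mul_iff_right₀ h2ξ).mp h6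
    have hsq2 : (s - ‖w‖) ^ 2 ≤ ‖r - w‖ ^ 2 := by
      have h2 := abs_norm_sub_norm_le r w
      calc (s - ‖w‖) ^ 2 = |‖r‖ - ‖w‖| ^ 2 := by rw [sq_abs]
        _ ≤ ‖r - w‖ ^ 2 := by gcongr
    have heq : ‖r - w‖ ^ 2 = (s - ‖w‖) ^ 2 := le_antisymm hsq hsq2
    -- inner product
    have hinner : (inner ℝ r w : ℝ) = s * tstar α γ ξ s := by
      have hexp : ‖r - w‖ ^ 2 = ‖r‖ ^ 2 - 2 * (inner ℝ r w : ℝ) + ‖w‖ ^ 2 := by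
        rw [norm_sub_sq_real]
      rw [hexp, hwn, ← hsdef] at heq
      linear_combination (-(1:ℝ)/2) * heq
    have hz : ‖w - c • r‖ ^ 2 = 0 := by
      have hexp : ‖w - c • r‖ ^ 2 = ‖w‖ ^ 2 - 2 * (inner ℝ w (c • r) : ℝ) + ‖c • r‖ ^ 2 := by
        rw [norm_sub_sq_real]
      rw [hexp, hnc, hwn, hcs]
      have hiw : (inner ℝ w (c • r) : ℝ) = c * (s * tstar α γ ξ s) := by
        rw [inner_smul_right, real_inner_comm, hinner]
      rw [hiw]
      linear_combination (-2 * tstar α γ ξ s) * hcs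
    have : w - c • r = 0 := by
      have := pow_eq_zero_iff (n := 2) (by norm_num) |>.mp hz
      exact norm_eq_zero.mp this
    exact sub_eq_zero.mp this
  · intro hw v
    rw [hw, hfc]
    exact le_trans (oneD_le hγ hξ h hs0 (norm_nonneg v)) (hlow v)
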